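/- (Energy identity bound) Let v', v'*, I', I'* be given by the Borgnakke–Larsen rules with parameters r, R ∈ [0,1] and unit vector σ, and set E^⟨⟩ = ⟨v,I⟩² + ⟨v*,I*⟩², s = 1 − (1−R)E/(m·E^⟨⟩), V = (v+v*)/2. Then s ∈ [0,1] and ⟨v',I'⟩² ≤ E^⟨⟩·( r(1−s) + (s/2)(1 + |V̂·σ|) ) where V̂ = V/|V| (interpreting the bound as ⟨v',I'⟩² ≤ E^⟨⟩·(r(1−s) + s) when V = 0). -/

import Mathlib

open scoped Classical

private lemma energy_aux (m A c a t RE rterm : ℝ)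
    (hkey : m * (2 * (A * c) * a) ≤ m * ((2 + A ^ 2 + c ^ 2) * t))
    (hmc2 : m * c ^ 2 = RE) :
    m * A + A * (m * A ^ 2 + 2 * m * (c * a) + m * c ^ 2) / 2 + A * rterm ≤
      A * rterm + (2 * m + m * A ^ 2 + RE) * (A + t) / 2 := by
  rw [← hmc2]
  linarith only [hkey]

set_option maxHeartbeats 1000000 in
theorem energy_identity_bound
    (m : ℝ) (hm : 0 < m)
    (v vs : EuclideanSpace ℝ (Fin 3)) (I Is : ℝ) (hI : 0 ≤ I) (hIs : 0 ≤ Is)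
    (σ : EuclideanSpace ℝ (Fin 3)) (hσ : ‖σ‖ = 1)
    (r R : ℝ) (hr : r ∈ Set.Icc (0:ℝ) 1) (hR : R ∈ Set.Icc (0:ℝ) 1)
    (E : ℝ) (hE : E = m / 4 * ‖v - vs‖ ^ 2 + I + Is)
    (v' : EuclideanSpace ℝ (Fin 3)) (I' : ℝ)
    (hv' : v' = (1/2 : ℝ) • (v + vs) + Real.sqrt (R * E / m) • σ)
    (hI' : I' = r * (1 - R) * E)
    (V : EuclideanSpace ℝ (Fin 3)) (hV : V = (1/2 : ℝ) • (v + vs))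
    (Ebr : ℝ)
    (hEbr : Ebr = (1 + ‖v‖ ^ 2 / 2 + I / m) + (1 + ‖vs‖ ^ 2 / 2 + Is / m))
    (s : ℝ) (hs : s = 1 - (1 - R) * E / (m * Ebr)) :
    s ∈ Set.Icc (0:ℝ) 1 ∧
      1 + ‖v'‖ ^ 2 / 2 + I' / m ≤
        Ebr * (if V = 0 then r * (1 - s) + s
               else r * (1 - s) + s / 2 * (1 + |(inner ℝ (‖V‖⁻¹ • V) σ : ℝ)|)) := by
  obtain ⟨hr0, hr1⟩ := hr
  obtain ⟨hR0, hR1⟩ := hR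
  have hm' : m ≠ 0 := ne_of_gt hm
  have hE0 : 0 ≤ E := by
    have h1 : 0 ≤ m / 4 * ‖v - vs‖ ^ 2 := by positivity
    rw [hE]
    linarith only [h1, hI, hIs]
  have hRE : 0 ≤ R * E / m := by positivity
  set c : ℝ := Real.sqrt (R * E / m) with hc
  have hc0 : 0 ≤ c := Real.sqrt_nonneg _
  have hc2 : c ^ 2 = R * E / m := Real.sq_sqrt hRE
  have hmc2 : m * c ^ 2 = R * E := by rw [hc2]; field_simp
  set A : ℝ := ‖V‖ with hA
  have hA0 : 0 ≤ A := norm_nonneg _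
  have hA2 : 4 * A ^ 2 = ‖v + vs‖ ^ 2 := by
    rw [hA, hV, norm_smul]
    simp
    ring
  have hpar : ‖v + vs‖ ^ 2 + ‖v - vs‖ ^ 2 = 2 * ‖v‖ ^ 2 + 2 * ‖vs‖ ^ 2 := by
    have h1 := norm_add_sq_real v vs
    have h2 := norm_sub_sq_real v vs
    linarith only [h1, h2]
  have hsum : ‖v‖ ^ 2 / 2 + ‖vs‖ ^ 2 / 2 = A ^ 2 + ‖v - vs‖ ^ 2 / 4 := by
    linarith only [hA2, hpar]
  have hmEbr : m * Ebr = 2 * m + m * A ^ 2 + E := by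
    have h1 : m * Ebr = 2 * m + m * (‖v‖ ^ 2 / 2 + ‖vs‖ ^ 2 / 2) + I + Is := by
      rw [hEbr]; field_simp; ring
    rw [h1, hsum, hE]; ring
  have hmEbrpos : 0 < m * Ebr := by
    have h1 : 0 ≤ m * A ^ 2 := by positivity
    rw [hmEbr]
    linarith only [h1, hm, hE0]
  have hEbrpos : 0 < Ebr := by
    have h := div_pos hmEbrpos hm
    rwa [mul_div_cancel_left₀ _ hm'] at h
  have hs' : m * Ebr * (1 - s) = (1 - R) * E := by
    rw [hs]
    field_simp
    ring
  have hs2 : m * Ebr * s = 2 * m + m * A ^ 2 + R * E := by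
    linear_combination hmEbr - hs'
  have hsIcc : s ∈ Set.Icc (0:ℝ) 1 := by
    constructor
    · have h1 : 0 ≤ m * Ebr * s := by
        rw [hs2]
        have h2 := mul_nonneg hR0 hE0
        have h3 : 0 ≤ m * A ^ 2 := by positivity
        linarith only [h2, h3, hm]
      exact (mul_nonneg_iff_of_pos_left hmEbrpos).mp h1
    · have h1 : 0 ≤ m * Ebr * (1 - s) := by
        rw [hs']
        exact mul_nonneg (by linarith only [hR1]) hE0
      have h2 := (mul_nonneg_iff_of_pos_left hmEbrpos).mp h1
      linarith only [h2]
  refine ⟨hsIcc, ?_⟩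
  obtain ⟨hs0, hs1⟩ := hsIcc
  -- inner product of V with σ
  set a : ℝ := (inner ℝ V σ : ℝ) with ha
  have hv'V : v' = V + c • σ := by rw [hv', hV]
  have hnv' : ‖v'‖ ^ 2 = A ^ 2 + 2 * (c * a) + c ^ 2 := by
    rw [hv'V, norm_add_sq_real, real_inner_smul_right, norm_smul, hσ]
    rw [Real.norm_eq_abs, abs_of_nonneg hc0]
    ring
  have haA : |a| ≤ A := by
    have := abs_real_inner_le_norm V σ
    rw [hσ] at this
    simpa using this
  by_cases hV0 : V = 0
  · rw [if_pos hV0]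
    have hA0' : A = 0 := by rw [hA, hV0]; simp
    have ha0 : a = 0 := by rw [ha, hV0]; simp
    rw [hnv', hI', hA0', ha0]
    rw [← mul_le_mul_iff_of_pos_right hm]
    have e1 : (1 + ((0:ℝ) ^ 2 + 2 * (c * 0) + c ^ 2) / 2 + r * (1 - R) * E / m) * m
        = m + R * E / 2 + r * ((1 - R) * E) := by
      rw [hc2]; field_simp; ring
    have e2 : Ebr * (r * (1 - s) + s) * m = r * ((1 - R) * E) + (2 * m + m * A ^ 2 + R * E) := by
      linear_combination r * hs' + hs2
    rw [e1, e2, hA0']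
    have h3 := mul_nonneg hR0 hE0
    have h4 : 0 ≤ m * A ^ 2 := by positivity
    linarith only [h3, h4, hm]
  · rw [if_neg hV0]
    have hApos : 0 < A := by
      rw [hA]
      exact norm_pos_iff.mpr hV0
    have hA' : A ≠ 0 := ne_of_gt hApos
    have hinner : (inner ℝ ((‖V‖)⁻¹ • V) σ : ℝ) = A⁻¹ * a := by
      rw [real_inner_smul_left, ha, hA]
    rw [hinner, hnv', hI', abs_mul, abs_of_nonneg (inv_nonneg.mpr hA0)]
    set t : ℝ := |a| with ht
    have ht0 : 0 ≤ t := abs_nonneg _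
    have hat : a ≤ t := le_abs_self a
    rw [← mul_le_mul_iff_of_pos_left (show (0:ℝ) < m * A by positivity)]
    have hAt : A * (A⁻¹ * t) = t := by field_simp
    have hrw : m * A * (Ebr * (r * (1 - s) + s / 2 * (1 + A⁻¹ * t)))
        = A * (r * ((1 - R) * E)) + (2 * m + m * A ^ 2 + R * E) * (A + t) / 2 := by
      have step : m * A * (Ebr * (r * (1 - s) + s / 2 * (1 + A⁻¹ * t)))
          = A * (r * (m * Ebr * (1 - s))) + (m * Ebr * s) * (A + A * (A⁻¹ * t)) / 2 := by
        ring
      rw [step, hAt, hs', hs2]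
    have hlhs : m * A * (1 + (A ^ 2 + 2 * (c * a) + c ^ 2) / 2 + r * (1 - R) * E / m)
        = m * A + A * (m * A ^ 2 + 2 * m * (c * a) + m * c ^ 2) / 2 + A * (r * ((1 - R) * E)) := by
      have hdiv : m * (r * (1 - R) * E / m) = r * ((1 - R) * E) := by
        rw [mul_div_assoc']
        rw [mul_comm, mul_div_assoc, div_self hm', mul_one]
        ring
      linear_combination A * hdiv
    rw [hrw, hlhs]
    have hkey : m * (2 * (A * c) * a) ≤ m * ((2 + A ^ 2 + c ^ 2) * t) := by
      have h1 : 2 * (A * c) * a ≤ 2 * (A * c) * t :=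
        mul_le_mul_of_nonneg_left hat (by positivity)
      have h2 : 2 * (A * c) * t ≤ (2 + A ^ 2 + c ^ 2) * t := by
        have h3 := mul_nonneg (sq_nonneg (A - c)) ht0
        linarith only [h3, ht0]
      exact mul_le_mul_of_nonneg_left (h1.trans h2) hm.le
    exact energy_aux m A c a t (R * E) (r * ((1 - R) * E)) hkey hmc2
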